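/- arXiv:1802.04968 — 3 statements merged into one kernel-verified Lean document; each statement's English description precedes it below -/
import Mathlib

section
/- Let G be a finite k-cozy graph whose edge connectivity λ(G) satisfies λ(G) < k. Then λ(G) is even. -/
open SimpleGraph

/-- A proper edge `k`-coloring arising from a `1`-factorization: every vertex is incident
to exactly one edge of each of the `k` colors. -/
def IsOneFactorizationColoring {V : Type*} (G : SimpleGraph V) (k : ℕ)
    (c : Sym2 V → Fin k) : Prop :=
  ∀ v : V, ∀ j : Fin k, ∃! e : Sym2 V, e ∈ G.edgeSet ∧ v ∈ e ∧ c e = j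

/-- `G` is `k`-cozy: a connected, `k`-regular graph together with a `1`-factorization
edge coloring by `k` colors. -/
def IsCozy {V : Type*} (G : SimpleGraph V) (k : ℕ) (c : Sym2 V → Fin k) : Prop :=
  G.Connected ∧ (∀ v : V, (G.neighborSet v).ncard = k) ∧ IsOneFactorizationColoring G k c

/-- The edge connectivity of a graph: the least cardinality of a set of edges whose
removal disconnects the graph. -/
noncomputable def edgeConn {V : Type*} (G : SimpleGraph V) : ℕ :=
  sInf {n : ℕ | ∃ D : Set (Sym2 V), D ⊆ G.edgeSet ∧ D.ncard = n ∧
    ¬(G.deleteEdges D).Connected}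

/-- If the edge connectivity of a finite `k`-cozy graph is less than `k`, then it is even. -/
theorem edgeConn_even_of_lt {V : Type*} [Fintype V] (G : SimpleGraph V) (k : ℕ)
    (c : Sym2 V → Fin k) (hG : IsCozy G k c) (hlt : edgeConn G < k) :
    Even (edgeConn G) := by
  classical
  obtain ⟨hconn, _hreg, hfact⟩ := hG
  by_cases hne : {n : ℕ | ∃ D : Set (Sym2 V), D ⊆ G.edgeSet ∧ D.ncard = n ∧
      ¬(G.deleteEdges D).Connected}.Nonempty
  swap
  · rw [Set.not_nonempty_iff_eq_empty] at hne
    unfold edgeConn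
    rw [hne, Nat.sInf_empty]
    exact Even.zero
  have hmem : ∃ D : Set (Sym2 V), D ⊆ G.edgeSet ∧ D.ncard = edgeConn G ∧
      ¬(G.deleteEdges D).Connected := Nat.sInf_mem hne
  obtain ⟨D, hDsub, hDcard, hDdis⟩ := hmem
  have hV : Nonempty V := hconn.nonempty
  -- get two non-reachable vertices in G \ D
  have hP : ¬ (G.deleteEdges D).Preconnected := fun h => hDdis ⟨h⟩
  rw [SimpleGraph.Preconnected] at hP
  push_neg at hP
  obtain ⟨u, w, hnr⟩ := hP
  set S : Set V := {v | (G.deleteEdges D).Reachable u v} with hSdef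
  have huS : u ∈ S := SimpleGraph.Reachable.refl u
  have hwS : w ∉ S := hnr
  set C : Set (Sym2 V) := {e | ∃ a b, G.Adj a b ∧ a ∈ S ∧ b ∉ S ∧ e = s(a, b)} with hCdef
  have hCsub : C ⊆ G.edgeSet := by
    rintro e ⟨a, b, hab, -, -, rfl⟩
    exact hab
  have hCD : C ⊆ D := by
    rintro e ⟨a, b, hab, haS, hbS, rfl⟩
    by_contra heD
    exact hbS (haS.trans (SimpleGraph.Adj.reachable (by simp [hab, heD])))
  -- any walk in G \ C starting in S stays in S
  have hstay : ∀ a v : V, (G.deleteEdges C).Walk a v → a ∈ S → v ∈ S := by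
    intro a v p
    induction p with
    | nil => exact id
    | @cons x y z h p ih =>
      intro hxS
      apply ih
      rw [SimpleGraph.deleteEdges_adj] at h
      by_contra hyS
      exact h.2 ⟨x, y, h.1, hxS, hyS, rfl⟩
  have hCdis : ¬ (G.deleteEdges C).Connected := by
    intro h
    obtain ⟨p⟩ := h.preconnected u w
    exact hwS (hstay u w p huS)
  have hle1 : edgeConn G ≤ C.ncard := Nat.sInf_le ⟨C, hCsub, rfl, hCdis⟩
  have hle2 : C.ncard ≤ D.ncard := Set.ncard_le_ncard hCD (Set.toFinite D)
  have hCcard : C.ncard = edgeConn G := le_antisymm (hDcard ▸ hle2) hle1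
  -- the 1-factorization: for each vertex and color, the unique incident edge
  choose f hf1 hf2 hf3 using fun (v : V) (j : Fin k) => (hfact v j).exists
  have hfuniq : ∀ (v : V) (j : Fin k) (e : Sym2 V),
      e ∈ G.edgeSet → v ∈ e → c e = j → e = f v j := fun v j e h1 h2 h3 =>
    (hfact v j).unique ⟨h1, h2, h3⟩ ⟨hf1 v j, hf2 v j, hf3 v j⟩
  set Sfin : Finset V := (Set.toFinite S).toFinset with hSfin
  set Cf : Finset (Sym2 V) := (Set.toFinite C).toFinset with hCf
  have hCfcard : Cf.card = edgeConn G := by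
    rw [← hCcard, Set.ncard_eq_toFinset_card C (Set.toFinite C)]
  set Cjf : Fin k → Finset (Sym2 V) := fun j => Cf.filter (fun e => c e = j) with hCjf
  -- per-color parity
  have hpar : ∀ j : Fin k, ∃ m, Sfin.card = (Cjf j).card + 2 * m := by
    intro j
    set T : Finset (Sym2 V) := Sfin.image (fun v => f v j) with hT
    have hfib : ∀ e ∈ T, (Sfin.filter (fun v => f v j = e)).card
        = if e ∈ Cjf j then 1 else 2 := by
      intro e he
      obtain ⟨a, haT, rfl⟩ := Finset.mem_image.mp he
      have haS : a ∈ S := (Set.Finite.mem_toFinset _).mp haT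
      obtain ⟨b, hb⟩ := Sym2.mem_iff_exists.mp (hf2 a j)
      have hedge : s(a, b) ∈ G.edgeSet := hb ▸ hf1 a j
      have hadj : G.Adj a b := hedge
      have hcol : c s(a, b) = j := hb ▸ hf3 a j
      have hfe : ∀ v : V, f v j = s(a, b) ↔ (v = a ∨ v = b) := by
        intro v
        constructor
        · intro h
          have := hf2 v j
          rw [h] at this
          simpa using this
        · intro h
          refine (hfuniq v j s(a, b) hedge ?_ hcol).symm
          simp [Sym2.mem_iff, h]
      rw [hb]
      by_cases hbS : b ∈ S
      · have hnotC : s(a, b) ∉ Cjf j := by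
          intro hC
          have : s(a, b) ∈ C :=
            (Set.Finite.mem_toFinset _).mp (Finset.mem_filter.mp hC).1
          obtain ⟨x, y, hxy, hxS, hyS, heq⟩ := this
          rw [Sym2.eq_iff] at heq
          rcases heq with ⟨hax, hby⟩ | ⟨hay, hbx⟩
          · exact hyS (hby ▸ hbS)
          · exact hyS (hay ▸ haS)
        rw [if_neg hnotC]
        have : Sfin.filter (fun v => f v j = s(a, b)) = {a, b} := by
          ext v
          simp only [Finset.mem_filter, Finset.mem_insert, Finset.mem_singleton, hfe]
          constructor
          · tauto
          · rintro (rfl | rfl)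
            · exact ⟨(Set.Finite.mem_toFinset _).mpr haS, Or.inl rfl⟩
            · exact ⟨(Set.Finite.mem_toFinset _).mpr hbS, Or.inr rfl⟩
        rw [this, Finset.card_insert_of_notMem (by simpa using hadj.ne),
          Finset.card_singleton]
      · have hinC : s(a, b) ∈ Cjf j := by
          rw [hCjf, Finset.mem_filter]
          refine ⟨?_, hcol⟩
          simp only [hCf, Set.Finite.mem_toFinset]
          exact ⟨a, b, hadj, haS, hbS, rfl⟩
        rw [if_pos hinC]
        have : Sfin.filter (fun v => f v j = s(a, b)) = {a} := by
          ext v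
          simp only [Finset.mem_filter, Finset.mem_singleton, hfe]
          constructor
          · rintro ⟨hv, rfl | rfl⟩
            · rfl
            · exact absurd ((Set.Finite.mem_toFinset _).mp hv) hbS
          · rintro rfl
            exact ⟨(Set.Finite.mem_toFinset _).mpr haS, Or.inl rfl⟩
        rw [this, Finset.card_singleton]
    have hCjT : Cjf j ⊆ T := by
      intro e he
      rw [hCjf, Finset.mem_filter] at he
      obtain ⟨heC, hec⟩ := he
      have heC' : e ∈ C := (Set.Finite.mem_toFinset _).mp heC
      obtain ⟨a, b, hab, haS, hbS, rfl⟩ := heC'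
      refine Finset.mem_image.mpr ⟨a, (Set.Finite.mem_toFinset _).mpr haS, ?_⟩
      exact (hfuniq a j s(a, b) hab (by simp) hec).symm
    have hsum : Sfin.card = ∑ e ∈ T, (Sfin.filter (fun v => f v j = e)).card :=
      Finset.card_eq_sum_card_image (fun v => f v j) Sfin
    rw [Finset.sum_congr rfl hfib] at hsum
    rw [Finset.sum_ite, Finset.sum_const, Finset.sum_const, smul_eq_mul, smul_eq_mul,
      mul_one] at hsum
    have hfilter : T.filter (fun e => e ∈ Cjf j) = Cjf j := by
      ext e
      simp only [Finset.mem_filter]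
      exact ⟨fun h => h.2, fun h => ⟨hCjT h, h⟩⟩
    rw [hfilter] at hsum
    exact ⟨(T.filter (fun e => ¬ e ∈ Cjf j)).card, by omega⟩
  have hCsum : Cf.card = ∑ j : Fin k, (Cjf j).card :=
    Finset.card_eq_sum_card_fiberwise (fun e _ => Finset.mem_univ (c e))
  rcases Nat.even_or_odd Sfin.card with hev | hod
  · -- each color class in the cut is even
    have : ∀ j : Fin k, Even ((Cjf j).card) := by
      intro j
      obtain ⟨m, hm⟩ := hpar j
      rcases hev with ⟨t, ht⟩
      exact Nat.even_iff.mpr (by omega)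
    rw [← hCfcard, hCsum]
    exact Finset.even_sum _ (fun j _ => this j)
  · -- each color class in the cut is odd, hence ≥ 1, giving ≥ k edges: contradiction
    exfalso
    have hone : ∀ j : Fin k, 1 ≤ (Cjf j).card := by
      intro j
      obtain ⟨m, hm⟩ := hpar j
      rcases hod with ⟨t, ht⟩
      omega
    have : k ≤ Cf.card := by
      rw [hCsum]
      calc k = ∑ _j : Fin k, 1 := by simp
        _ ≤ ∑ j : Fin k, (Cjf j).card := Finset.sum_le_sum (fun j _ => hone j)
    exact absurd hlt (not_lt.mpr (hCfcard ▸ this))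
end

section
/- Let G = (V, E) be a finite k-cozy graph with edge connectivity λ(G) = 2ℓ, and let D ⊆ E be a set of edges with |D| = 2ℓ whose removal disconnects G into two connected components G₁ and G₂. Let V₁ and V₂ be multisets of vertices of one of the components (either both from G₁ or both from G₂) with |V₁| = |V₂| = q where q ≤ ℓ. Then there exist q pairwise edge-disjoint paths in G connecting V₁ and V₂ with multiplicities preserved: the multiset of starting vertices of the paths equals V₁ and the multiset of ending vertices equals V₂, so every vertex of V₁ and of V₂ (counted with multiplicity) is an endpoint of some such path. -/
open SimpleGraph

set_option linter.unusedSectionVars false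
set_option maxHeartbeats 1000000
open SimpleGraph Finset
namespace EDP
variable {V : Type*} [Fintype V] [DecidableEq V]

def outdeg (F : Finset (V × V)) (v : V) : ℕ := (F.filter fun d => d.1 = v).card
def indeg (F : Finset (V × V)) (v : V) : ℕ := (F.filter fun d => d.2 = v).card

def IsFlow (G : SimpleGraph V) (F : Finset (V × V)) (S₀ T₀ : Multiset V) : Prop :=
  (∀ d ∈ F, G.Adj d.1 d.2) ∧ (∀ u v : V, (u, v) ∈ F → (v, u) ∉ F) ∧
    ∀ v : V, outdeg F v + T₀.count v = indeg F v + S₀.count v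

def RES (G : SimpleGraph V) (F : Finset (V × V)) (x y : V) : Prop :=
  (G.Adj x y ∧ (x, y) ∉ F ∧ (y, x) ∉ F) ∨ (y, x) ∈ F

lemma outdeg_insert {F : Finset (V × V)} {x y : V} (h : (x, y) ∉ F) (v : V) :
    outdeg (insert (x, y) F) v = outdeg F v + (if v = x then 1 else 0) := by
  unfold outdeg
  rw [Finset.filter_insert]
  split_ifs with h1 h2 h2
  · rw [Finset.card_insert_of_notMem (fun hc => h (Finset.mem_of_mem_filter _ hc))]
  · exact absurd h1.symm h2
  · exact absurd h2.symm h1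
  · rfl

lemma indeg_insert {F : Finset (V × V)} {x y : V} (h : (x, y) ∉ F) (v : V) :
    indeg (insert (x, y) F) v = indeg F v + (if v = y then 1 else 0) := by
  unfold indeg
  rw [Finset.filter_insert]
  split_ifs with h1 h2 h2
  · rw [Finset.card_insert_of_notMem (fun hc => h (Finset.mem_of_mem_filter _ hc))]
  · exact absurd h1.symm h2
  · exact absurd h2.symm h1
  · rfl

lemma outdeg_erase {F : Finset (V × V)} {x y : V} (h : (x, y) ∈ F) (v : V) :
    outdeg F v = outdeg (F.erase (x, y)) v + (if v = x then 1 else 0) := by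
  unfold outdeg
  rw [Finset.filter_erase]
  split_ifs with h1
  · subst h1
    rw [Finset.card_erase_add_one (by simp [Finset.mem_filter, h])]
  · rw [Finset.erase_eq_of_notMem (by simp only [Finset.mem_filter]; rintro ⟨-, hc⟩; exact h1 hc.symm)]
    omega

lemma indeg_erase {F : Finset (V × V)} {x y : V} (h : (x, y) ∈ F) (v : V) :
    indeg F v = indeg (F.erase (x, y)) v + (if v = y then 1 else 0) := by
  unfold indeg
  rw [Finset.filter_erase]
  split_ifs with h1
  · subst h1
    rw [Finset.card_erase_add_one (by simp [Finset.mem_filter, h])]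
  · rw [Finset.erase_eq_of_notMem (by simp only [Finset.mem_filter]; rintro ⟨-, hc⟩; exact h1 hc.symm)]
    omega

/-- pushing one unit of flow along a residual step relocates a sink from `y` to `z`. -/
lemma toggle_step {G : SimpleGraph V} {F : Finset (V × V)} {S₀ T₀ : Multiset V} {y z : V}
    (hf : IsFlow G F S₀ (y ::ₘ T₀)) (hres : RES G F y z) :
    ∃ F', IsFlow G F' S₀ (z ::ₘ T₀) ∧
      ∀ u v : V, u ≠ y → v ≠ y → ((u, v) ∈ F ↔ (u, v) ∈ F') := by
  by_cases h : (z, y) ∈ F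
  · have hne : z ≠ y := (hf.1 _ h).ne
    refine ⟨F.erase (z, y), ⟨fun d hd => hf.1 d (Finset.mem_of_mem_erase hd),
      fun u v hu hc => hf.2.1 u v (Finset.mem_of_mem_erase hu) (Finset.mem_of_mem_erase hc),
      ?_⟩, ?_⟩
    · intro v
      have h1 := outdeg_erase h v
      have h2 := indeg_erase h v
      have h3 := hf.2.2 v
      simp only [Multiset.count_cons] at h3 ⊢
      rcases eq_or_ne v y with rfl | hvy <;> rcases eq_or_ne v z with rfl | hvz <;>
        simp_all <;> omega
    · intro u v hu hv
      rw [Finset.mem_erase]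
      constructor
      · intro hm; exact ⟨fun hc => hv (congrArg Prod.snd hc), hm⟩
      · exact And.right
  · have hfirst : G.Adj y z ∧ (y, z) ∉ F ∧ (z, y) ∉ F := hres.resolve_right h
    have hne : y ≠ z := hfirst.1.ne
    refine ⟨insert (y, z) F, ⟨?_, ?_, ?_⟩, ?_⟩
    · intro d hd
      rcases Finset.mem_insert.1 hd with rfl | hd
      · exact hfirst.1
      · exact hf.1 d hd
    · intro u v hu hc
      rcases Finset.mem_insert.1 hu with heq | hu
      · rcases Finset.mem_insert.1 hc with heq2 | hc
        · rw [Prod.mk.injEq] at heq heq2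
          exact hne (heq.1.symm ▸ heq2.2.symm ▸ rfl)
        · rw [Prod.mk.injEq] at heq
          exact h (heq.1 ▸ heq.2 ▸ hc)
      · rcases Finset.mem_insert.1 hc with heq2 | hc
        · rw [Prod.mk.injEq] at heq2
          exact h (heq2.1 ▸ heq2.2 ▸ hu)
        · exact hf.2.1 u v hu hc
    · intro v
      have h1 := outdeg_insert hfirst.2.1 v
      have h2 := indeg_insert hfirst.2.1 v
      have h3 := hf.2.2 v
      simp only [Multiset.count_cons] at h3 ⊢
      rcases eq_or_ne v y with rfl | hvy <;> rcases eq_or_ne v z with rfl | hvz <;>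
        simp_all <;> omega
    · intro u v hu hv
      rw [Finset.mem_insert]
      constructor
      · exact Or.inr
      · rintro (heq | hm)
        · rw [Prod.mk.injEq] at heq; exact absurd heq.1 hu
        · exact hm

lemma res_pres {G : SimpleGraph V} {F F' : Finset (V × V)} {y : V}
    (hmem : ∀ u v : V, u ≠ y → v ≠ y → ((u, v) ∈ F ↔ (u, v) ∈ F'))
    {u v : V} (hu : u ≠ y) (hv : v ≠ y) (h : RES G F u v) : RES G F' u v := by
  rcases h with ⟨hadj, h1, h2⟩ | h1
  · exact Or.inl ⟨hadj, fun hc => h1 ((hmem u v hu hv).2 hc),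
      fun hc => h2 ((hmem v u hv hu).2 hc)⟩
  · exact Or.inr ((hmem v u hv hu).1 h1)

variable {α : Type*} {R : α → α → Prop}

lemma getLastD_append : ∀ (l₁ : List α) (a x : α) (l₂ : List α),
    (l₁ ++ a :: l₂).getLastD x = l₂.getLastD a
  | [], a, x, l₂ => List.getLastD_cons
  | c :: l₁, a, x, l₂ => by
    rw [List.cons_append, List.getLastD_cons]
    exact getLastD_append l₁ a c l₂

lemma chain_snoc : ∀ (l : List α) (a : α), List.Chain R a l →
    ∀ b, R (l.getLastD a) b → List.Chain R a (l ++ [b])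
  | [], a, _, b, hr => List.Chain.cons hr List.Chain.nil
  | c :: l, a, hc, b, hr => by
    unfold List.Chain at hc
    rw [List.chain_cons] at hc
    rw [List.getLastD_cons] at hr
    exact List.Chain.cons hc.1 (chain_snoc l c hc.2 b hr)

lemma chain_drop : ∀ (l₁ : List α) {a b : α} {l₂ : List α},
    List.Chain R a (l₁ ++ b :: l₂) → List.Chain R b l₂
  | [], _, _, _, h => (List.chain_cons.1 h).2
  | c :: l₁, _, _, _, h => chain_drop l₁ (List.chain_cons.1 h).2

lemma chain_to_nodup : ∀ (n : ℕ) (l : List α), l.length ≤ n → ∀ a, List.Chain R a l →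
    ∃ l' : List α, List.Chain R a l' ∧ (a :: l').Nodup ∧ (∀ x ∈ l', x ∈ l) ∧
      l'.getLastD a = l.getLastD a := by
  intro n
  induction n with
  | zero =>
    intro l hl a _
    rw [List.length_eq_zero_iff.1 (Nat.le_zero.1 hl)]
    exact ⟨[], List.Chain.nil, by simp, by simp, rfl⟩
  | succ n ih =>
    intro l hl a hc
    by_cases ha : a ∈ l
    · obtain ⟨l₁, l₂, rfl⟩ := List.append_of_mem ha
      have hc₂ : List.Chain R a l₂ := chain_drop l₁ hc
      have hlen : l₂.length ≤ n := by simp at hl; omega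
      obtain ⟨l', h1, h2, h3, h4⟩ := ih l₂ hlen a hc₂
      refine ⟨l', h1, h2, fun x hx => by simp [h3 x hx], ?_⟩
      rw [h4, getLastD_append]
    · match l, hc with
      | [], _ => exact ⟨[], List.Chain.nil, by simp, by simp, rfl⟩
      | b :: l, hc =>
        unfold List.Chain at hc
        rw [List.chain_cons] at hc
        obtain ⟨l', h1, h2, h3, h4⟩ := ih l (by simp at hl; omega) b hc.2
        refine ⟨b :: l', List.chain_cons.2 ⟨hc.1, h1⟩, ?_, ?_, ?_⟩
        · refine List.nodup_cons.2 ⟨?_, h2⟩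
          intro hmem
          rcases List.mem_cons.1 hmem with rfl | hmem
          · exact ha (List.mem_cons_self)
          · exact ha (List.mem_cons_of_mem _ (h3 a hmem))
        · intro x hx
          rcases List.mem_cons.1 hx with rfl | hx
          · exact List.mem_cons_self
          · exact List.mem_cons_of_mem _ (h3 x hx)
        · rw [List.getLastD_cons, List.getLastD_cons, h4]

lemma chain_mono_mem {R' : α → α → Prop} : ∀ (l : List α) (a : α), List.Chain R a l →
    (∀ u v, u ∈ a :: l → v ∈ l → R u v → R' u v) → List.Chain R' a l
  | [], _, _, _ => List.Chain.nil
  | b :: l, a, hc, himp => by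
    unfold List.Chain at hc ⊢
    rw [List.chain_cons] at hc ⊢
    exact ⟨himp a b (by simp) (by simp) hc.1,
      chain_mono_mem l b hc.2 fun u v hu hv hr =>
        himp u v (List.mem_cons_of_mem _ hu) (List.mem_cons_of_mem _ hv) hr⟩


variable {G : SimpleGraph V}

lemma reloc : ∀ (l : List V) (F : Finset (V × V)) (T₀ : Multiset V) (y : V),
    ∀ {S₀ : Multiset V}, IsFlow G F S₀ (y ::ₘ T₀) → List.Chain (RES G F) y l →
    (y :: l).Nodup → ∃ F', IsFlow G F' S₀ (l.getLastD y ::ₘ T₀)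
  | [], F, T₀, y, S₀, hf, _, _ => ⟨F, hf⟩
  | z :: l', F, T₀, y, S₀, hf, hchain, hnodup => by
    unfold List.Chain at hchain
    rw [List.chain_cons] at hchain
    obtain ⟨F₁, hf₁, hmem⟩ := toggle_step hf hchain.1
    have hy : y ∉ z :: l' := (List.nodup_cons.1 hnodup).1
    have hchain₁ : List.Chain (RES G F₁) z l' := by
      refine chain_mono_mem l' z hchain.2 fun u v hu hv hr => ?_
      exact res_pres hmem (fun hc => hy (hc ▸ hu)) (fun hc => hy (hc ▸ List.mem_cons_of_mem _ hv)) hr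
    obtain ⟨F', hf'⟩ := reloc l' F₁ T₀ z hf₁ hchain₁ (List.nodup_cons.1 hnodup).2
    rw [List.getLastD_cons]
    exact ⟨F', hf'⟩

open scoped Classical in
noncomputable def cutDart (G : SimpleGraph V) (A : Finset V) : Finset (V × V) :=
  Finset.univ.filter fun d => G.Adj d.1 d.2 ∧ d.1 ∈ A ∧ d.2 ∉ A

lemma card_filter_split (F : Finset (V × V)) (P Q : V × V → Prop)
    [DecidablePred P] [DecidablePred Q] :
    (F.filter P).card = (F.filter fun d => P d ∧ Q d).card +
      (F.filter fun d => P d ∧ ¬ Q d).card := by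
  have := Finset.card_filter_add_card_filter_not (s := F.filter P) (p := Q)
  rw [Finset.filter_filter, Finset.filter_filter] at this
  omega

lemma sum_outdeg (F : Finset (V × V)) (A : Finset V) :
    ∑ v ∈ A, outdeg F v = (F.filter fun d => d.1 ∈ A).card := by
  unfold outdeg
  simp only [Finset.card_filter]
  rw [Finset.sum_comm]
  refine Finset.sum_congr rfl fun d _ => ?_
  rw [Finset.sum_ite_eq]

lemma sum_indeg (F : Finset (V × V)) (A : Finset V) :
    ∑ v ∈ A, indeg F v = (F.filter fun d => d.2 ∈ A).card := by
  unfold indeg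
  simp only [Finset.card_filter]
  rw [Finset.sum_comm]
  refine Finset.sum_congr rfl fun d _ => ?_
  rw [Finset.sum_ite_eq]

lemma flow_value {F : Finset (V × V)} {S₀ T₀ : Multiset V} (hf : IsFlow G F S₀ T₀) :
    Multiset.card S₀ = Multiset.card T₀ := by
  have h := Finset.sum_congr rfl (fun v (_ : v ∈ Finset.univ) => hf.2.2 v)
  rw [Finset.sum_add_distrib, Finset.sum_add_distrib, sum_outdeg, sum_indeg] at h
  simp only [Finset.mem_univ, Finset.filter_true] at h
  rw [Multiset.sum_count_eq_card (fun a _ => Finset.mem_univ a),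
    Multiset.sum_count_eq_card (fun a _ => Finset.mem_univ a)] at h
  omega

lemma augment {S T : Multiset V} {q : ℕ} (hSq : Multiset.card S = q) (hTq : Multiset.card T = q)
    (Hcut : ∀ A : Finset V, A.Nonempty → A ≠ Finset.univ → q ≤ (cutDart G A).card)
    {F : Finset (V × V)} {S₀ T₀ : Multiset V} (hf : IsFlow G F S₀ T₀)
    (hS₀ : S₀ ≤ S) (hT₀ : T₀ ≤ T) (hne : S₀ ≠ S) :
    ∃ F' S₀' T₀', IsFlow G F' S₀' T₀' ∧ S₀' ≤ S ∧ T₀' ≤ T ∧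
      Multiset.card S₀' = Multiset.card S₀ + 1 := by
  classical
  obtain ⟨s, hs⟩ := Multiset.lt_iff_cons_le.1 (lt_of_le_of_ne hS₀ hne)
  set A : Finset V := Finset.univ.filter
    (fun x => ∃ s' l, (s' ::ₘ S₀ ≤ S) ∧ List.Chain (RES G F) s' l ∧ l.getLastD s' = x) with hA
  have hsA : s ∈ A := by
    rw [hA, Finset.mem_filter]
    exact ⟨Finset.mem_univ _, s, [], hs, List.Chain.nil, rfl⟩
  have hclosed : ∀ x ∈ A, ∀ y, RES G F x y → y ∈ A := by
    intro x hx y hr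
    rw [hA, Finset.mem_filter] at hx ⊢
    obtain ⟨-, s', l, hle, hchain, hlast⟩ := hx
    refine ⟨Finset.mem_univ _, s', l ++ [y], hle, ?_, List.getLastD_concat⟩
    exact chain_snoc l s' hchain y (hlast ▸ hr)
  by_cases hsink : ∃ t ∈ A, t ::ₘ T₀ ≤ T
  · obtain ⟨t, htA, ht⟩ := hsink
    rw [hA, Finset.mem_filter] at htA
    obtain ⟨-, s', l, hle, hchain, hlast⟩ := htA
    obtain ⟨l', hc', hnd', -, hlast'⟩ := chain_to_nodup l.length l le_rfl s' hchain
    have hbase : IsFlow G F (s' ::ₘ S₀) (s' ::ₘ T₀) := by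
      refine ⟨hf.1, hf.2.1, fun v => ?_⟩
      have := hf.2.2 v
      simp only [Multiset.count_cons]
      split_ifs <;> omega
    obtain ⟨F', hf'⟩ := reloc l' F T₀ s' hbase hc' hnd'
    rw [hlast', hlast] at hf'
    exact ⟨F', s' ::ₘ S₀, t ::ₘ T₀, hf', hle, ht, by simp⟩
  · exfalso
    push_neg at hsink
    -- every vertex of A has its T-capacity saturated
    have hTsat : ∀ x ∈ A, T₀.count x = T.count x := by
      intro x hx
      have h1 : T₀.count x ≤ T.count x := Multiset.le_iff_count.1 hT₀ x
      by_contra hc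
      refine hsink x hx (Multiset.le_iff_count.2 fun v => ?_)
      rw [Multiset.count_cons]
      split_ifs with hv
      · subst hv; omega
      · exact Multiset.le_iff_count.1 hT₀ v
    have hAne : A ≠ Finset.univ := by
      intro hAuniv
      have : ∀ v : V, T₀.count v = T.count v := fun v => hTsat v (hAuniv ▸ Finset.mem_univ v)
      have hT₀T : T₀ = T := Multiset.ext.2 this
      have hcards : Multiset.card S₀ = q := by rw [flow_value hf, hT₀T, hTq]
      have : S₀ = S := Multiset.eq_of_le_of_card_le hS₀ (by omega)
      exact hne this
    -- summing conservation over A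
    have hsum := Finset.sum_congr rfl (fun v (_ : v ∈ A) => hf.2.2 v)
    rw [Finset.sum_add_distrib, Finset.sum_add_distrib, sum_outdeg, sum_indeg] at hsum
    have hsplit1 : (F.filter fun d => d.1 ∈ A).card =
        (F.filter fun d => d.1 ∈ A ∧ d.2 ∈ A).card +
        (F.filter fun d => d.1 ∈ A ∧ d.2 ∉ A).card :=
      card_filter_split F _ _
    have hsplit2 : (F.filter fun d => d.2 ∈ A).card =
        (F.filter fun d => d.2 ∈ A ∧ d.1 ∈ A).card +
        (F.filter fun d => d.2 ∈ A ∧ d.1 ∉ A).card :=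
      card_filter_split F _ _
    have hboth : (F.filter fun d => d.2 ∈ A ∧ d.1 ∈ A).card =
        (F.filter fun d => d.1 ∈ A ∧ d.2 ∈ A).card := by
      congr 1
      ext d
      simp only [Finset.mem_filter]
      tauto
    have hincut : (F.filter fun d => d.2 ∈ A ∧ d.1 ∉ A).card = 0 := by
      rw [Finset.card_eq_zero, Finset.filter_eq_empty_iff]
      rintro d hd ⟨h2, h1⟩
      exact h1 (hclosed d.2 h2 d.1 (Or.inr (by rwa [Prod.mk.eta])))
    have hcutsub : cutDart G A ⊆ F.filter fun d => d.1 ∈ A ∧ d.2 ∉ A := by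
      intro d hd
      simp only [cutDart, Finset.mem_filter] at hd
      obtain ⟨-, hadj, h1, h2⟩ := hd
      have hnres : ¬ RES G F d.1 d.2 := fun hr => h2 (hclosed d.1 h1 d.2 hr)
      rw [RES] at hnres
      push_neg at hnres
      obtain ⟨hfirst, hsecond⟩ := hnres
      have : (d.1, d.2) ∈ F := by
        by_contra hc
        exact hsecond (hfirst hadj hc)
      rw [Finset.mem_filter]
      exact ⟨by rwa [Prod.mk.eta] at this, h1, h2⟩
    have hcut := Hcut A ⟨s, hsA⟩ hAne
    have hcutle : q ≤ (F.filter fun d => d.1 ∈ A ∧ d.2 ∉ A).card :=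
      le_trans hcut (Finset.card_le_card hcutsub)
    have hTeq : ∑ v ∈ A, T₀.count v = ∑ v ∈ A, T.count v :=
      Finset.sum_congr rfl fun v hv => hTsat v hv
    have hSlt : ∑ v ∈ A, S₀.count v < ∑ v ∈ A, S.count v := by
      refine Finset.sum_lt_sum (fun v _ => Multiset.le_iff_count.1 hS₀ v) ⟨s, hsA, ?_⟩
      have := Multiset.le_iff_count.1 hs s
      rw [Multiset.count_cons_self] at this
      omega
    have hSle : ∑ v ∈ A, S.count v ≤ q := by
      rw [← hSq, ← Multiset.sum_count_eq_card (fun (a : V) (_ : a ∈ S) => Finset.mem_univ a)]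
      exact Finset.sum_le_sum_of_subset (Finset.subset_univ A)
    omega

lemma exists_full_flow {S T : Multiset V} {q : ℕ} (hSq : Multiset.card S = q)
    (hTq : Multiset.card T = q)
    (Hcut : ∀ A : Finset V, A.Nonempty → A ≠ Finset.univ → q ≤ (cutDart G A).card) :
    ∃ F, IsFlow G F S T := by
  suffices h : ∀ (n : ℕ) (F : Finset (V × V)) (S₀ T₀ : Multiset V), IsFlow G F S₀ T₀ →
      S₀ ≤ S → T₀ ≤ T → q - Multiset.card S₀ ≤ n → ∃ F', IsFlow G F' S T by
    refine h q ∅ 0 0 ⟨by simp, by simp, fun v => by simp [outdeg, indeg]⟩ (by simp) (by simp)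
      (by simp)
  intro n
  induction n with
  | zero =>
    intro F S₀ T₀ hf hS₀ hT₀ hn
    have h1 : Multiset.card S₀ ≤ q := hSq ▸ Multiset.card_le_card hS₀
    have hS : S₀ = S := Multiset.eq_of_le_of_card_le hS₀ (by omega)
    have h2 : Multiset.card T₀ = Multiset.card T := by
      rw [← flow_value hf, hS, hSq, hTq]
    have hT : T₀ = T := Multiset.eq_of_le_of_card_le hT₀ (by omega)
    exact ⟨F, hS ▸ hT ▸ hf⟩
  | succ n ih =>
    intro F S₀ T₀ hf hS₀ hT₀ hn
    by_cases hS : S₀ = S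
    · have h2 : Multiset.card T₀ = Multiset.card T := by
        rw [← flow_value hf, hS, hSq, hTq]
      have hT : T₀ = T := Multiset.eq_of_le_of_card_le hT₀ (by omega)
      exact ⟨F, hS ▸ hT ▸ hf⟩
    · obtain ⟨F', S₀', T₀', hf', hS', hT', hcard⟩ := augment hSq hTq Hcut hf hS₀ hT₀ hS
      exact ih F' S₀' T₀' hf' hS' hT' (by omega)

/-- edge-disjointness of walk packages -/
def EDis {G : SimpleGraph V} (x y : Σ p : V × V, G.Walk p.1 p.2) : Prop :=
  ∀ e ∈ x.2.edges, e ∉ y.2.edges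

lemma EDis_symm : Symmetric (EDis (G := G)) := fun _ _ h e hey hex => h e hex hey

lemma decompose : ∀ (n : ℕ) (F : Finset (V × V)) (S₀ T₀ : Multiset V),
    Multiset.card S₀ + F.card ≤ n → IsFlow G F S₀ T₀ →
    ∃ L : List (Σ p : V × V, G.Walk p.1 p.2),
      (↑(L.map fun x => x.1.1) : Multiset V) = S₀ ∧
      (↑(L.map fun x => x.1.2) : Multiset V) = T₀ ∧
      List.Pairwise EDis L ∧
      ∀ x ∈ L, ∀ e ∈ x.2.edges, ∃ d ∈ F, Sym2.mk d.1 d.2 = e := by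
  intro n
  induction n with
  | zero =>
    intro F S₀ T₀ hn hf
    have h0 : S₀ = 0 := by
      rw [← Multiset.card_eq_zero]; omega
    have h1 : T₀ = 0 := by
      rw [← Multiset.card_eq_zero, ← flow_value hf]; omega
    exact ⟨[], by simp [h0], by simp [h1], List.Pairwise.nil, by simp⟩
  | succ n ih =>
    intro F S₀ T₀ hn hf
    rcases Multiset.empty_or_exists_mem S₀ with h0 | ⟨s, hs⟩
    · have h1 : T₀ = 0 := by
        rw [← Multiset.card_eq_zero, ← flow_value hf, h0]; simp
      exact ⟨[], by simp [h0], by simp [h1], List.Pairwise.nil, by simp⟩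
    by_cases hst : s ∈ T₀
    · -- trivial nil walk from s to s
      have hflow' : IsFlow G F (S₀.erase s) (T₀.erase s) := by
        refine ⟨hf.1, hf.2.1, fun v => ?_⟩
        have hb := hf.2.2 v
        rcases eq_or_ne v s with rfl | hvs
        · rw [Multiset.count_erase_self, Multiset.count_erase_self]
          have c1 : 1 ≤ S₀.count v := Multiset.one_le_count_iff_mem.2 hs
          have c2 : 1 ≤ T₀.count v := Multiset.one_le_count_iff_mem.2 hst
          omega
        · rw [Multiset.count_erase_of_ne hvs, Multiset.count_erase_of_ne hvs]
          exact hb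
      obtain ⟨L', hm1, hm2, hpw, hed⟩ := ih F (S₀.erase s) (T₀.erase s)
        (by
          have h := Multiset.card_erase_of_mem hs
          rw [Nat.pred_eq_sub_one] at h
          have h2 := Multiset.card_erase_of_mem hst
          rw [Nat.pred_eq_sub_one] at h2
          have hpos : 0 < Multiset.card S₀ := Multiset.card_pos.2 (fun h0 => by
            rw [h0] at hs; simp at hs)
          omega) hflow'
      refine ⟨⟨(s, s), SimpleGraph.Walk.nil⟩ :: L', ?_, ?_, ?_, ?_⟩
      · rw [List.map_cons, ← Multiset.cons_coe, hm1]
        exact Multiset.cons_erase hs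
      · rw [List.map_cons, ← Multiset.cons_coe, hm2]
        exact Multiset.cons_erase hst
      · refine List.Pairwise.cons (fun y _ => ?_) hpw
        intro e he
        simp [SimpleGraph.Walk.edges_nil] at he
      · rintro x hx e he
        rcases List.mem_cons.1 hx with rfl | hx
        · simp [SimpleGraph.Walk.edges_nil] at he
        · exact hed x hx e he
    · -- extract an edge (s, u) from the flow
      have hb := hf.2.2 s
      have hT0 : T₀.count s = 0 := Multiset.count_eq_zero.2 hst
      have hS1 : 1 ≤ S₀.count s := Multiset.one_le_count_iff_mem.2 hs
      have hout : 1 ≤ outdeg F s := by omega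
      have : (F.filter fun d => d.1 = s).Nonempty := by
        rw [← Finset.card_pos]; exact hout
      obtain ⟨d, hd⟩ := this
      rw [Finset.mem_filter] at hd
      obtain ⟨hdF, hd1⟩ := hd
      obtain ⟨s', u⟩ := d
      have hd1' : s' = s := hd1
      subst hd1'
      have hadj : G.Adj s' u := hf.1 _ hdF
      have hsu : s' ≠ u := hadj.ne
      have hflow' : IsFlow G (F.erase (s', u)) (u ::ₘ S₀.erase s') T₀ := by
        refine ⟨fun d hd => hf.1 d (Finset.mem_of_mem_erase hd),
          fun a b ha hc => hf.2.1 a b (Finset.mem_of_mem_erase ha) (Finset.mem_of_mem_erase hc),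
          fun v => ?_⟩
        have h1 := outdeg_erase hdF v
        have h2 := indeg_erase hdF v
        have hbv := hf.2.2 v
        rw [Multiset.count_cons]
        rcases eq_or_ne v s' with rfl | hvs
        · rw [Multiset.count_erase_self]
          simp only [if_pos rfl, if_neg hsu, eq_self_iff_true, if_true] at h1 h2 ⊢
          omega
        · rw [Multiset.count_erase_of_ne hvs]
          rcases eq_or_ne v u with rfl | hvu
          · simp only [if_pos rfl, if_neg hvs, eq_self_iff_true, if_true] at h1 h2 ⊢
            omega
          · simp only [if_neg hvs, if_neg hvu] at h1 h2 ⊢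
            omega
      obtain ⟨L', hm1, hm2, hpw, hed⟩ := ih (F.erase (s', u)) (u ::ₘ S₀.erase s') T₀
        (by
          have h1 := Multiset.card_erase_of_mem hs
          rw [Nat.pred_eq_sub_one] at h1
          have h2 := Finset.card_erase_of_mem hdF
          have hpos : 0 < Multiset.card S₀ := Multiset.card_pos.2 (fun h0 => by
            rw [h0] at hs; simp at hs)
          have hFpos : 0 < F.card := Finset.card_pos.2 ⟨_, hdF⟩
          simp only [Multiset.card_cons]
          omega) hflow'
      -- find the package starting at u
      have hu_mem : u ∈ (↑(L'.map fun x => x.1.1) : Multiset V) := by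
        rw [hm1]; exact Multiset.mem_cons_self _ _
      rw [Multiset.mem_coe, List.mem_map] at hu_mem
      obtain ⟨x, hxL, hxu⟩ := hu_mem
      obtain ⟨l₁, l₂, rfl⟩ := List.append_of_mem hxL
      obtain ⟨⟨xu, xv⟩, w⟩ := x
      simp only at hxu
      have hxu' : u = xu := hxu.symm
      subst hxu'
      have hm1' : (↑(List.map (fun x => x.1.1) (l₁ ++ l₂)) : Multiset V) = S₀.erase s' := by
        simp only [List.map_append, List.map_cons, ← Multiset.cons_coe, ← Multiset.coe_add,
          Multiset.add_cons] at hm1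
        simp only [List.map_append, ← Multiset.coe_add]
        exact (Multiset.cons_inj_right _).1 hm1
      have hm2' : xv ::ₘ (↑(List.map (fun x => x.1.2) (l₁ ++ l₂)) : Multiset V) = T₀ := by
        simp only [List.map_append, List.map_cons, ← Multiset.cons_coe, ← Multiset.coe_add,
          Multiset.add_cons] at hm2
        simp only [List.map_append, ← Multiset.coe_add]
        exact hm2
      have hperm : List.Perm (l₁ ++ ⟨(u, xv), w⟩ :: l₂) (⟨(u, xv), w⟩ :: (l₁ ++ l₂)) :=
        List.perm_middle
      have hpw' := (hperm.pairwise_iff (fun {x y} h => EDis_symm h)).1 hpw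
      obtain ⟨hhead, hrest⟩ := List.pairwise_cons.1 hpw'
      have hmemL' : ∀ y ∈ l₁ ++ l₂, y ∈ l₁ ++ ⟨(u, xv), w⟩ :: l₂ := by
        intro y hy
        rcases List.mem_append.1 hy with hy | hy
        · exact List.mem_append.2 (Or.inl hy)
        · exact List.mem_append.2 (Or.inr (List.mem_cons_of_mem _ hy))
      have hnosu : ∀ y ∈ l₁ ++ ⟨(u, xv), w⟩ :: l₂, ∀ e ∈ y.2.edges, e ≠ s(s', u) := by
        intro y hy e he hc
        obtain ⟨d', hd'F, hd'e⟩ := hed y hy e he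
        rw [hc] at hd'e
        rcases Sym2.eq_iff.1 hd'e with ⟨ha, hb⟩ | ⟨ha, hb⟩
        · have : d' = (s', u) := Prod.ext ha hb
          rw [this] at hd'F
          exact (Finset.mem_erase.1 hd'F).1 rfl
        · have : d' = (u, s') := Prod.ext ha hb
          rw [this] at hd'F
          exact hf.2.1 s' u hdF (Finset.mem_of_mem_erase hd'F)
      refine ⟨⟨(s', xv), SimpleGraph.Walk.cons hadj w⟩ :: (l₁ ++ l₂), ?_, ?_, ?_, ?_⟩
      · rw [List.map_cons, ← Multiset.cons_coe, hm1']
        exact Multiset.cons_erase hs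
      · rw [List.map_cons, ← Multiset.cons_coe]
        exact hm2'
      · refine List.pairwise_cons.2 ⟨?_, hrest⟩
        intro y hy e he hc
        simp only [SimpleGraph.Walk.edges_cons, List.mem_cons] at he
        rcases he with rfl | he
        · exact hnosu y (hmemL' y hy) _ hc rfl
        · exact hhead y hy e he hc
      · rintro x hx e he
        rcases List.mem_cons.1 hx with rfl | hx
        · simp only [SimpleGraph.Walk.edges_cons, List.mem_cons] at he
          rcases he with rfl | he
          · exact ⟨(s', u), hdF, rfl⟩
          · obtain ⟨d', hd'F, hd'e⟩ := hed ⟨(u, xv), w⟩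
              (List.mem_append.2 (Or.inr (List.mem_cons_self))) e he
            exact ⟨d', Finset.mem_of_mem_erase hd'F, hd'e⟩
        · obtain ⟨d', hd'F, hd'e⟩ := hed x (hmemL' x hx) e he
          exact ⟨d', Finset.mem_of_mem_erase hd'F, hd'e⟩

lemma cut_of_edgeConn {G : SimpleGraph V} {m : ℕ} (hec : edgeConn G = m)
    (A : Finset V) (hA : A.Nonempty) (hAne : A ≠ Finset.univ) :
    m ≤ (cutDart G A).card := by
  classical
  set crossSet : Set (Sym2 V) :=
    {e | e ∈ G.edgeSet ∧ ∃ u v, e = s(u, v) ∧ u ∈ A ∧ v ∉ A} with hcross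
  obtain ⟨a, ha⟩ := hA
  obtain ⟨b, hb⟩ : ∃ b, b ∉ A := by
    by_contra hc
    push_neg at hc
    exact hAne (Finset.eq_univ_iff_forall.2 hc)
  have key : ∀ (x y : V) (w : (G.deleteEdges crossSet).Walk x y), x ∈ A → y ∈ A := by
    intro x y w
    induction w with
    | nil => exact id
    | @cons x' z y' h p ih =>
      intro hx
      rw [SimpleGraph.deleteEdges_adj] at h
      apply ih
      by_contra hz
      exact h.2 ⟨(SimpleGraph.mem_edgeSet G).2 h.1, x', z, rfl, hx, hz⟩
  have hnconn : ¬(G.deleteEdges crossSet).Connected := by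
    intro hc
    obtain ⟨w⟩ := hc.preconnected a b
    exact hb (key a b w ha)
  have h1 : edgeConn G ≤ crossSet.ncard :=
    Nat.sInf_le ⟨crossSet, fun e he => he.1, rfl, hnconn⟩
  have himg : crossSet = ↑((cutDart G A).image fun d => Sym2.mk d.1 d.2) := by
    ext e
    simp only [hcross, Set.mem_setOf_eq, Finset.coe_image, Set.mem_image, Finset.mem_coe,
      cutDart, Finset.mem_filter, Finset.mem_univ, true_and]
    constructor
    · rintro ⟨hE, u, v, rfl, hu, hv⟩
      exact ⟨(u, v), ⟨(SimpleGraph.mem_edgeSet G).1 hE, hu, hv⟩, rfl⟩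
    · rintro ⟨d, ⟨hadj, hd1, hd2⟩, rfl⟩
      exact ⟨(SimpleGraph.mem_edgeSet G).2 hadj, d.1, d.2, rfl, hd1, hd2⟩
  have h2 : crossSet.ncard ≤ (cutDart G A).card := by
    rw [himg, Set.ncard_coe_finset]
    exact Finset.card_image_le
  omega

lemma ofFn_get_comp {α β : Type*} (l : List α) (g : α → β) :
    List.ofFn (fun i => g (l.get i)) = l.map g := by
  have h1 : List.map g (List.ofFn l.get) = List.ofFn (g ∘ l.get) := List.map_ofFn
  rw [List.ofFn_get] at h1
  exact h1.symm

lemma main_aux (G : SimpleGraph V) (q : ℕ) (S T : Multiset V)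
    (hS : Multiset.card S = q) (hT : Multiset.card T = q)
    (Hcut : ∀ A : Finset V, A.Nonempty → A ≠ Finset.univ → q ≤ (cutDart G A).card) :
    ∃ (a b : Fin q → V) (P : ∀ i : Fin q, G.Walk (a i) (b i)),
      (∀ i, (P i).IsPath) ∧
      (∀ i j, i ≠ j → ∀ e, e ∈ (P i).edges → e ∉ (P j).edges) ∧
      (Finset.univ.val.map a = S) ∧ (Finset.univ.val.map b = T) := by
  obtain ⟨F, hf⟩ := exists_full_flow hS hT Hcut
  obtain ⟨L, hm1, hm2, hpw, -⟩ := decompose (Multiset.card S + F.card) F S T le_rfl hf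
  set L₂ : List (Σ p : V × V, G.Walk p.1 p.2) :=
    L.map (fun x => ⟨x.1, x.2.bypass⟩) with hL₂
  have hm1' : (↑(L₂.map fun x => x.1.1) : Multiset V) = S := by
    rw [hL₂, List.map_map]; exact hm1
  have hm2' : (↑(L₂.map fun x => x.1.2) : Multiset V) = T := by
    rw [hL₂, List.map_map]; exact hm2
  have hpw₂ : List.Pairwise EDis L₂ := by
    refine List.Pairwise.map _ ?_ hpw
    intro x y hxy e he hc
    exact hxy e (SimpleGraph.Walk.edges_bypass_subset _ he)
      (SimpleGraph.Walk.edges_bypass_subset _ hc)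
  have hpath : ∀ x ∈ L₂, x.2.IsPath := by
    rintro x hx
    rw [hL₂, List.mem_map] at hx
    obtain ⟨y, -, rfl⟩ := hx
    exact SimpleGraph.Walk.bypass_isPath _
  have hlen : L₂.length = q := by
    have : Multiset.card (↑(L₂.map fun x => x.1.1) : Multiset V) = q := by rw [hm1', hS]
    simpa using this
  subst hlen
  refine ⟨fun i => (L₂.get i).1.1, fun i => (L₂.get i).1.2, fun i => (L₂.get i).2,
    ?_, ?_, ?_, ?_⟩
  · intro i
    exact hpath _ (List.get_mem L₂ i)
  · intro i j hij e hei hej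
    rw [List.pairwise_iff_getElem] at hpw₂
    rcases lt_or_gt_of_ne hij with h | h
    · exact hpw₂ i j i.isLt j.isLt (by exact_mod_cast h) e
        (by simpa [List.get_eq_getElem] using hei) (by simpa [List.get_eq_getElem] using hej)
    · exact hpw₂ j i j.isLt i.isLt (by exact_mod_cast h) e
        (by simpa [List.get_eq_getElem] using hej) (by simpa [List.get_eq_getElem] using hei)
  · have h := ofFn_get_comp L₂ (fun x => x.1.1)
    rw [Fin.univ_val_map, h]
    exact hm1'
  · have h := ofFn_get_comp L₂ (fun x => x.1.2)
    rw [Fin.univ_val_map, h]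
    exact hm2'

end EDP


/-- Let `G` be a finite `k`-cozy graph with edge connectivity `2ℓ`, and let `D` be a set of
`2ℓ` edges whose removal disconnects `G` into two connected components on vertex sets
`V₁` and `V₂`. If `S` and `T` are multisets of vertices of one of the components
(say the one on `W`, with `W = V₁` or `W = V₂`) with `|S| = |T| = q ≤ ℓ`, then there are
`q` pairwise edge-disjoint paths in `G` whose starting vertices form exactly the multiset
`S` and whose ending vertices form exactly the multiset `T`. -/
theorem edge_disjoint_paths_between_multisets {V : Type*} [Fintype V]
    (G : SimpleGraph V) (k ℓ q : ℕ)
    (c : Sym2 V → Fin k) (hG : IsCozy G k c)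
    (hec : edgeConn G = 2 * ℓ)
    (D : Set (Sym2 V)) (hD : D ⊆ G.edgeSet) (hDcard : D.ncard = 2 * ℓ)
    (V₁ V₂ : Set V) (hdisj : Disjoint V₁ V₂) (hcover : V₁ ∪ V₂ = Set.univ)
    (hne₁ : V₁.Nonempty) (hne₂ : V₂.Nonempty)
    (hG₁ : ((G.deleteEdges D).induce V₁).Connected)
    (hG₂ : ((G.deleteEdges D).induce V₂).Connected)
    (hsep : ∀ a ∈ V₁, ∀ b ∈ V₂, ¬(G.deleteEdges D).Adj a b)
    (W : Set V) (hW : W = V₁ ∨ W = V₂)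
    (S T : Multiset V) (hS : ∀ x ∈ S, x ∈ W) (hT : ∀ x ∈ T, x ∈ W)
    (hScard : Multiset.card S = q) (hTcard : Multiset.card T = q) (hq : q ≤ ℓ) :
    ∃ (a b : Fin q → V) (P : ∀ i : Fin q, G.Walk (a i) (b i)),
      (∀ i, (P i).IsPath) ∧
      (∀ i j, i ≠ j → ∀ e, e ∈ (P i).edges → e ∉ (P j).edges) ∧
      (Finset.univ.val.map a = S) ∧ (Finset.univ.val.map b = T) := by
  classical
  have Hcut : ∀ A : Finset V, A.Nonempty → A ≠ Finset.univ → q ≤ (EDP.cutDart G A).card := by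
    intro A hA hAne
    have h := EDP.cut_of_edgeConn hec A hA hAne
    omega
  exact EDP.main_aux G q S T hScard hTcard Hcut
end

section
/- The N-fold I-sum does not in general preserve total unimodularity: there exists a totally unimodular 3 × 4 matrix A with entries in {−1, 0, 1} (for example, A with rows (0, 1, −1, 1), (1, 0, 1, 0), (1, 1, 0, 0)) such that its 2-fold I-sum, the 10 × 8 matrix with a top block row consisting of two copies of the 4 × 4 identity matrix and below it the block diagonal matrix with two copies of A, is not totally unimodular. -/
open Matrix

/-- The `N`-fold `I`-sum of an `m × n` matrix `A`: the `(mN + n) × (nN)` matrix whose top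
`n` rows consist of `N` horizontally concatenated copies of the `n × n` identity matrix,
and whose remaining `mN` rows form the block diagonal matrix with `N` copies of `A`. -/
def ISum {m n : ℕ} (N : ℕ) (A : Matrix (Fin m) (Fin n) ℚ) :
    Matrix (Fin n ⊕ (Fin N × Fin m)) (Fin N × Fin n) ℚ :=
  fun i j =>
    match i with
    | Sum.inl r => if r = j.2 then 1 else 0
    | Sum.inr (t, r) => if t = j.1 then A r j.2 else 0

@[simp]
lemma cons_val_five_aux {α : Type*} {m : ℕ} (x : α) (u : Fin m.succ.succ.succ.succ.succ → α) :
    Matrix.vecCons x u 5 =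
      Matrix.vecHead (Matrix.vecTail (Matrix.vecTail (Matrix.vecTail (Matrix.vecTail u)))) :=
  rfl

lemma mem_range_signType_aux {q : ℚ} (h : q = 0 ∨ q = 1 ∨ q = -1) :
    q ∈ Set.range SignType.cast := by
  rcases h with h|h|h
  · exact ⟨0, by rw [h]; rfl⟩
  · exact ⟨1, by rw [h]; rfl⟩
  · exact ⟨-1, by rw [h]; simp⟩

lemma neg_mem_range_signType_aux {q : ℚ} (h : q ∈ Set.range (SignType.cast : SignType → ℚ)) :
    -q ∈ Set.range (SignType.cast : SignType → ℚ) := by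
  obtain ⟨s, hs⟩ := h
  exact ⟨-s, by rw [← hs]; simp⟩

set_option maxHeartbeats 1000000 in
lemma Amat_TU_aux :
    (!![0, 1, -1, 1; 1, 0, 1, 0; 1, 1, 0, 0] : Matrix (Fin 3) (Fin 4) ℚ).IsTotallyUnimodular := by
  set A : Matrix (Fin 3) (Fin 4) ℚ := !![0, 1, -1, 1; 1, 0, 1, 0; 1, 1, 0, 0] with hA
  intro k f g hf hg
  have hk : k ≤ 3 := by
    by_contra h
    have := Fintype.card_le_of_injective f hf
    simp at this; omega
  have key : ∀ g' : Fin 3 → Fin 4,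
      (A.submatrix id g').det ∈ Set.range (SignType.cast : SignType → ℚ) := by
    intro g'
    apply mem_range_signType_aux
    rw [Matrix.det_fin_three]
    simp only [Matrix.submatrix_apply, id_eq]
    generalize g' 0 = j0; generalize g' 1 = j1; generalize g' 2 = j2
    fin_cases j0 <;> fin_cases j1 <;> fin_cases j2 <;>
      norm_num [hA, Matrix.vecHead, Matrix.vecTail, Matrix.cons_val_two]
  interval_cases k
  · exact ⟨1, by simp [Matrix.det_fin_zero]⟩
  · apply mem_range_signType_aux
    rw [Matrix.det_fin_one]
    simp only [Matrix.submatrix_apply]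
    generalize f 0 = i
    generalize g 0 = j
    fin_cases i <;> fin_cases j <;> norm_num [hA, Matrix.vecHead, Matrix.vecTail]
  · apply mem_range_signType_aux
    rw [Matrix.det_fin_two]
    simp only [Matrix.submatrix_apply]
    generalize f 0 = i0; generalize f 1 = i1
    generalize g 0 = j0; generalize g 1 = j1
    fin_cases i0 <;> fin_cases i1 <;> fin_cases j0 <;> fin_cases j1 <;>
      norm_num [hA, Matrix.vecHead, Matrix.vecTail]
  · have hfb : Function.Bijective f := Finite.injective_iff_bijective.mp hf
    have hsub : A.submatrix f g = (A.submatrix id g).submatrix (Equiv.ofBijective f hfb) id := rfl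
    rw [hsub, Matrix.det_permute]
    rcases Int.units_eq_one_or (Equiv.Perm.sign (Equiv.ofBijective f hfb)) with h | h <;>
      rw [h]
    · simpa using key g
    · push_cast
      rw [neg_one_mul]
      exact neg_mem_range_signType_aux (key g)

set_option maxHeartbeats 2000000 in
set_option maxRecDepth 8000 in
lemma det6_aux : (!![1, 0, 0, 1, 0, 0; 0, 0, 1, 0, 0, 1; 0, -1, 1, 0, 0, 0;
      1, 1, 0, 0, 0, 0; 0, 0, 0, 0, 1, 1; 0, 0, 0, 1, 1, 0] : Matrix (Fin 6) (Fin 6) ℤ).det = 2 := by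
  simp [Matrix.det_succ_row_zero, Fin.sum_univ_succ]
  decide

set_option maxHeartbeats 2000000 in
set_option maxRecDepth 8000 in
lemma ISum_not_TU_aux :
    ¬(ISum 2 (!![0, 1, -1, 1; 1, 0, 1, 0; 1, 1, 0, 0] : Matrix (Fin 3) (Fin 4) ℚ)).IsTotallyUnimodular := by
  intro h
  rw [Matrix.isTotallyUnimodular_iff] at h
  have key := h 6
    ![Sum.inl 0, Sum.inl 3, Sum.inr (0, 0), Sum.inr (0, 1), Sum.inr (1, 0), Sum.inr (1, 2)]
    ![(0, 0), (0, 2), (0, 3), (1, 0), (1, 1), (1, 3)]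
  have hM : (ISum 2 (!![0, 1, -1, 1; 1, 0, 1, 0; 1, 1, 0, 0] : Matrix (Fin 3) (Fin 4) ℚ)).submatrix
      ![Sum.inl 0, Sum.inl 3, Sum.inr (0, 0), Sum.inr (0, 1), Sum.inr (1, 0), Sum.inr (1, 2)]
      ![(0, 0), (0, 2), (0, 3), (1, 0), (1, 1), (1, 3)] =
      (Int.castRingHom ℚ).mapMatrix
        (!![1, 0, 0, 1, 0, 0; 0, 0, 1, 0, 0, 1; 0, -1, 1, 0, 0, 0;
            1, 1, 0, 0, 0, 0; 0, 0, 0, 0, 1, 1; 0, 0, 0, 1, 1, 0] : Matrix (Fin 6) (Fin 6) ℤ) := by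
    ext i j
    fin_cases i <;> fin_cases j <;>
      simp [ISum, RingHom.mapMatrix_apply, Matrix.map_apply,
        Matrix.vecHead, Matrix.vecTail]
  simp only [hM, ← RingHom.map_det, det6_aux] at key
  obtain ⟨s, hs⟩ := key
  cases s <;> norm_num at hs

/-- The `N`-fold `I`-sum does not preserve total unimodularity: the displayed `3 × 4`
matrix `A` is totally unimodular, but its `2`-fold `I`-sum is not. -/
theorem iSum_not_preserve_totallyUnimodular :
    ∃ A : Matrix (Fin 3) (Fin 4) ℚ,
      A = !![0, 1, -1, 1; 1, 0, 1, 0; 1, 1, 0, 0] ∧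
      A.IsTotallyUnimodular ∧ ¬(ISum 2 A).IsTotallyUnimodular := by
  exact ⟨_, rfl, Amat_TU_aux, ISum_not_TU_aux⟩
end
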